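/- arXiv:2005.11028 — 3 statements merged into one kernel-verified Lean document; each statement's English description precedes it below -/
import Mathlib

section
/- Let (ε_n) be a strictly decreasing sequence in (0,1] with ε_n → 0, and let (r_n) be a real sequence defined for n ≥ n₀. Then there exists a continuously differentiable function f : [0,1] → ℝ with f(0) = 0, f'(0) = 0, and f(ε_n) = r_n for all n ≥ n₀, if and only if r_n → 0 and (r_n − r_{n+1})/(ε_n − ε_{n+1}) → 0 as n → ∞. -/
open Set Filter Topology

lemma fwd_aux (ε : ℕ → ℝ) (hε_anti : StrictAnti ε)
    (hε_mem : ∀ n, ε n ∈ Set.Ioc (0 : ℝ) 1)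
    (hε_lim : Filter.Tendsto ε Filter.atTop (nhds 0))
    (r : ℕ → ℝ) (n₀ : ℕ) (f : ℝ → ℝ)
    (hf : ContDiffOn ℝ 1 f (Set.Icc 0 1)) (hf0 : f 0 = 0)
    (hfd0 : derivWithin f (Set.Icc 0 1) 0 = 0)
    (hfe : ∀ n, n₀ ≤ n → f (ε n) = r n) :
    Filter.Tendsto r Filter.atTop (nhds 0) ∧
      Filter.Tendsto (fun n => (r n - r (n + 1)) / (ε n - ε (n + 1)))
        Filter.atTop (nhds 0) := by
  have hmem01 : ∀ n, ε n ∈ Icc (0:ℝ) 1 := fun n => ⟨(hε_mem n).1.le, (hε_mem n).2⟩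
  have h01 : (0:ℝ) ∈ Icc (0:ℝ) 1 := ⟨le_refl 0, zero_le_one⟩
  have hcontf : ContinuousOn f (Icc 0 1) := hf.continuousOn
  have hεI : Tendsto ε atTop (𝓝[Icc (0:ℝ) 1] 0) := by
    rw [tendsto_nhdsWithin_iff]
    exact ⟨hε_lim, Eventually.of_forall hmem01⟩
  constructor
  · have h1 : Tendsto (fun n => f (ε n)) atTop (𝓝 0) := by
      have := (hcontf 0 h01).tendsto.comp hεI
      rwa [hf0] at this
    refine h1.congr' ?_
    filter_upwards [eventually_ge_atTop n₀] with n hn using hfe n hn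
  · set D := derivWithin f (Set.Icc 0 1) with hD
    have hDcont : ContinuousOn D (Icc 0 1) :=
      hf.continuousOn_derivWithin (uniqueDiffOn_Icc zero_lt_one) le_rfl
    have hdiff : DifferentiableOn ℝ f (Icc 0 1) := hf.differentiableOn one_ne_zero
    have key : ∀ n : ℕ, ∃ c ∈ Ioo (ε (n+1)) (ε n),
        D c = (f (ε n) - f (ε (n+1))) / (ε n - ε (n+1)) := by
      intro n
      have hab : ε (n+1) < ε n := hε_anti (lt_add_one n)
      have hsub : Icc (ε (n+1)) (ε n) ⊆ Icc (0:ℝ) 1 :=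
        Icc_subset_Icc (hε_mem (n+1)).1.le (hε_mem n).2
      refine exists_hasDerivAt_eq_slope f D hab (hcontf.mono hsub) ?_
      intro x hx
      have hx01 : x ∈ Ioo (0:ℝ) 1 :=
        ⟨(hε_mem (n+1)).1.trans hx.1, lt_of_lt_of_le hx.2 (hε_mem n).2⟩
      have hnh : Icc (0:ℝ) 1 ∈ 𝓝 x := Icc_mem_nhds hx01.1 hx01.2
      have hda : DifferentiableAt ℝ f x :=
        (hdiff x ⟨hx01.1.le, hx01.2.le⟩).differentiableAt hnh
      have : D x = deriv f x := derivWithin_of_mem_nhds hnh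
      rw [this]
      exact hda.hasDerivAt
    choose c hc1 hc2 using key
    have hclim : Tendsto c atTop (𝓝 0) := by
      refine tendsto_of_tendsto_of_tendsto_of_le_of_le tendsto_const_nhds hε_lim
        (fun n => ((hε_mem (n+1)).1.trans (hc1 n).1).le) (fun n => (hc1 n).2.le)
    have hcI : Tendsto c atTop (𝓝[Icc (0:ℝ) 1] 0) := by
      rw [tendsto_nhdsWithin_iff]
      refine ⟨hclim, Eventually.of_forall fun n => ?_⟩
      exact ⟨((hε_mem (n+1)).1.trans (hc1 n).1).le,
        ((hc1 n).2.le.trans (hε_mem n).2)⟩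
    have hDlim : Tendsto (fun n => D (c n)) atTop (𝓝 0) := by
      have := (hDcont 0 h01).tendsto.comp hcI
      rwa [hfd0] at this
    refine hDlim.congr' ?_
    filter_upwards [eventually_ge_atTop n₀] with n hn
    rw [hc2 n, hfe n hn, hfe (n+1) (hn.trans (Nat.le_succ n))]

lemma bwd_aux (ε : ℕ → ℝ) (hε_anti : StrictAnti ε)
    (hε_mem : ∀ n, ε n ∈ Set.Ioc (0 : ℝ) 1)
    (hε_lim : Filter.Tendsto ε Filter.atTop (nhds 0))
    (r : ℕ → ℝ) (n₀ : ℕ)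
    (hr : Filter.Tendsto r Filter.atTop (nhds 0))
    (hs : Filter.Tendsto (fun n => (r n - r (n + 1)) / (ε n - ε (n + 1)))
        Filter.atTop (nhds 0)) :
    ∃ f : ℝ → ℝ, ContDiffOn ℝ 1 f (Set.Icc 0 1) ∧ f 0 = 0 ∧
      derivWithin f (Set.Icc 0 1) 0 = 0 ∧ ∀ n, n₀ ≤ n → f (ε n) = r n := by
  classical
  -- basic notation
  set a : ℕ → ℝ := fun m => ε m - ε (m+1) with ha_def
  have ha : ∀ m, 0 < a m := fun m => sub_pos.2 (hε_anti (lt_add_one m))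
  set s : ℕ → ℝ := fun m => (r m - r (m+1)) / a m with hs_def
  set u : ℕ → ℝ → ℝ := fun m x => (x - ε (m+1)) / a m with hu_def
  set H : ℕ → ℝ → ℝ :=
    fun m x => r (m+1) + (r m - r (m+1)) * ((u m x)^2 * (3 - 2 * u m x)) with hH_def
  set dH : ℕ → ℝ → ℝ := fun m x => s m * (6 * u m x - 6 * (u m x)^2) with hdH_def
  -- basic facts about u
  have hu_left : ∀ m, u m (ε (m+1)) = 0 := by
    intro m; simp [hu_def]
  have hu_right : ∀ m, u m (ε m) = 1 := by
    intro m
    show (ε m - ε (m+1)) / a m = 1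
    rw [ha_def]
    exact div_self (ha m).ne'
  have hu01 : ∀ m x, ε (m+1) ≤ x → x ≤ ε m → u m x ∈ Icc (0:ℝ) 1 := by
    intro m x h1 h2
    constructor
    · exact div_nonneg (by linarith) (ha m).le
    · rw [div_le_one (ha m)]
      simp only [ha_def]; linarith
  -- values of H at the endpoints
  have hH_left : ∀ m, H m (ε (m+1)) = r (m+1) := by
    intro m; simp only [hH_def, hu_left]; ring
  have hH_right : ∀ m, H m (ε m) = r m := by
    intro m; simp only [hH_def, hu_right]; ring
  have hdH_left : ∀ m, dH m (ε (m+1)) = 0 := by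
    intro m; simp only [hdH_def, hu_left]; ring
  have hdH_right : ∀ m, dH m (ε m) = 0 := by
    intro m; simp only [hdH_def, hu_right]; ring
  -- H has derivative dH
  have hH_deriv : ∀ m x, HasDerivAt (H m) (dH m x) x := by
    intro m x
    have hu : HasDerivAt (u m) (1 / a m) x := by
      simpa [hu_def] using ((hasDerivAt_id x).sub_const (ε (m+1))).div_const (a m)
    have hq : HasDerivAt (fun t : ℝ => t^2 * (3 - 2*t))
        (6 * u m x - 6 * (u m x)^2) (u m x) := by
      have h2 : HasDerivAt (fun t : ℝ => 3 - 2*t) (-2) (u m x) := by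
        simpa using ((hasDerivAt_id (u m x)).const_mul (2:ℝ)).const_sub 3
      have h1 := (hasDerivAt_pow 2 (u m x)).mul h2
      exact h1.congr_deriv (by ring)
    have hcomp := (hq.comp x hu).const_mul (r m - r (m+1))
    have : HasDerivAt (H m) ((r m - r (m+1)) * ((6 * u m x - 6 * (u m x)^2) * (1 / a m))) x := by
      simpa [hH_def] using hcomp.const_add (r (m+1))
    convert this using 1
    simp only [hdH_def, hs_def]
    field_simp
  -- bounds
  have hdH_bound : ∀ m x, ε (m+1) ≤ x → x ≤ ε m → |dH m x| ≤ 3/2 * |s m| := by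
    intro m x h1 h2
    obtain ⟨hu0, hu1⟩ := hu01 m x h1 h2
    have h6 : |6 * u m x - 6 * (u m x)^2| ≤ 3/2 := by
      rw [abs_le]
      constructor <;>
        nlinarith [mul_nonneg hu0 (sub_nonneg.2 hu1), sq_nonneg (u m x - 1/2)]
    calc |dH m x| = |s m| * |6 * u m x - 6 * (u m x)^2| := by
          rw [hdH_def]; exact abs_mul _ _
      _ ≤ |s m| * (3/2) := mul_le_mul_of_nonneg_left h6 (abs_nonneg _)
      _ = 3/2 * |s m| := by ring
  have hH_bound : ∀ m x, ε (m+1) ≤ x → x ≤ ε m →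
      |H m x| ≤ |r m| + 2 * |r (m+1)| := by
    intro m x h1 h2
    obtain ⟨hu0, hu1⟩ := hu01 m x h1 h2
    have hP : |(u m x)^2 * (3 - 2 * u m x)| ≤ 1 := by
      rw [abs_le]
      constructor <;>
        nlinarith [sq_nonneg (u m x), sq_nonneg (1 - u m x),
          mul_nonneg (sq_nonneg (1 - u m x)) hu0,
          mul_nonneg (sq_nonneg (u m x)) (by linarith : (0:ℝ) ≤ 3 - 2 * u m x)]
    calc |H m x| ≤ |r (m+1)| + |(r m - r (m+1)) * ((u m x)^2 * (3 - 2 * u m x))| :=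
          abs_add_le _ _
      _ ≤ |r (m+1)| + |r m - r (m+1)| * 1 := by
          rw [abs_mul]
          exact add_le_add_right (mul_le_mul_of_nonneg_left hP (abs_nonneg _)) _
      _ ≤ |r (m+1)| + (|r m| + |r (m+1)|) * 1 := by
          gcongr
          exact abs_sub _ _
      _ = |r m| + 2 * |r (m+1)| := by ring
  -- existence of small indices
  have hex : ∀ x : ℝ, 0 < x → ∃ n, ε n < x := by
    intro x hx
    exact (hε_lim.eventually_lt_const hx).exists
  -- the interpolating function and its derivative
  set f : ℝ → ℝ := fun x =>
    if hx : ∃ n, ε n < x then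
      (if ε n₀ ≤ x then r n₀ else H (Nat.find hx - 1) x)
    else 0 with hf_def
  set g : ℝ → ℝ := fun x =>
    if hx : ∃ n, ε n < x then
      (if ε n₀ ≤ x then 0 else dH (Nat.find hx - 1) x)
    else 0 with hg_def
  have hfind : ∀ (m : ℕ) (x : ℝ), ε (m+1) < x → x ≤ ε m →
      ∀ (hx : ∃ n, ε n < x), Nat.find hx = m + 1 := by
    intro m x h1 h2 hx
    rw [Nat.find_eq_iff]
    exact ⟨h1, fun k hk => not_lt.2 (h2.trans (hε_anti.antitone (Nat.lt_succ_iff.1 hk)))⟩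
  have hf_zero : ∀ x : ℝ, x ≤ 0 → f x = 0 := by
    intro x hx
    have hne : ¬ ∃ n, ε n < x := by
      rintro ⟨n, hn⟩
      have := (hε_mem n).1
      linarith
    simp only [hf_def, dif_neg hne]
  have hg_zero : ∀ x : ℝ, x ≤ 0 → g x = 0 := by
    intro x hx
    have hne : ¬ ∃ n, ε n < x := by
      rintro ⟨n, hn⟩
      have := (hε_mem n).1
      linarith
    simp only [hg_def, dif_neg hne]
  have hf_const : ∀ x : ℝ, ε n₀ ≤ x → f x = r n₀ := by
    intro x hx
    have h : ∃ n, ε n < x := hex x (lt_of_lt_of_le (hε_mem n₀).1 hx)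
    simp only [hf_def]
    rw [dif_pos h, if_pos hx]
  have hg_const : ∀ x : ℝ, ε n₀ ≤ x → g x = 0 := by
    intro x hx
    have h : ∃ n, ε n < x := hex x (lt_of_lt_of_le (hε_mem n₀).1 hx)
    simp only [hg_def]
    rw [dif_pos h, if_pos hx]
  have hfH : ∀ m, n₀ ≤ m → ∀ x, ε (m+1) < x → x ≤ ε m → f x = H m x := by
    intro m hm x h1 h2
    have hx : ∃ n, ε n < x := ⟨m+1, h1⟩
    simp only [hf_def]
    rw [dif_pos hx]
    by_cases hcase : ε n₀ ≤ x
    · have hmn : m = n₀ := by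
        by_contra hne
        have h3 : n₀ < m := lt_of_le_of_ne hm (Ne.symm hne)
        have h4 : ε m < ε n₀ := hε_anti h3
        linarith
      subst hmn
      have hxε : x = ε m := le_antisymm h2 hcase
      rw [if_pos hcase, hxε, hH_right]
    · rw [if_neg hcase, hfind m x h1 h2 hx, Nat.add_sub_cancel]
  have hgdH : ∀ m, n₀ ≤ m → ∀ x, ε (m+1) < x → x ≤ ε m → g x = dH m x := by
    intro m hm x h1 h2
    have hx : ∃ n, ε n < x := ⟨m+1, h1⟩
    simp only [hg_def]
    rw [dif_pos hx]
    by_cases hcase : ε n₀ ≤ x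
    · have hmn : m = n₀ := by
        by_contra hne
        have h3 : n₀ < m := lt_of_le_of_ne hm (Ne.symm hne)
        have h4 : ε m < ε n₀ := hε_anti h3
        linarith
      subst hmn
      have hxε : x = ε m := le_antisymm h2 hcase
      rw [if_pos hcase, hxε, hdH_right]
    · rw [if_neg hcase, hfind m x h1 h2 hx, Nat.add_sub_cancel]
  have hfH' : ∀ m, n₀ ≤ m → ∀ x, ε (m+1) ≤ x → x ≤ ε m → f x = H m x := by
    intro m hm x h1 h2
    rcases eq_or_lt_of_le h1 with h1' | h1'
    · subst h1'
      rw [hH_left, hfH (m+1) (hm.trans (Nat.le_succ m)) (ε (m+1))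
        (hε_anti (lt_add_one (m+1))) le_rfl]
      exact hH_right (m+1)
    · exact hfH m hm x h1' h2
  have hgdH' : ∀ m, n₀ ≤ m → ∀ x, ε (m+1) ≤ x → x ≤ ε m → g x = dH m x := by
    intro m hm x h1 h2
    rcases eq_or_lt_of_le h1 with h1' | h1'
    · subst h1'
      rw [hdH_left, hgdH (m+1) (hm.trans (Nat.le_succ m)) (ε (m+1))
        (hε_anti (lt_add_one (m+1))) le_rfl]
      exact hdH_right (m+1)
    · exact hgdH m hm x h1' h2
  have hcover : ∀ x : ℝ, 0 < x → x ≤ ε n₀ → ∃ m, n₀ ≤ m ∧ ε (m+1) < x ∧ x ≤ ε m := by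
    intro x hx0 hxn
    obtain hx := hex x hx0
    have hN : ε (Nat.find hx) < x := Nat.find_spec hx
    have hn₀N : n₀ < Nat.find hx := by
      by_contra hle
      push_neg at hle
      have : ε n₀ ≤ ε (Nat.find hx) := hε_anti.antitone hle
      linarith
    refine ⟨Nat.find hx - 1, by omega, ?_, ?_⟩
    · have : Nat.find hx - 1 + 1 = Nat.find hx := by omega
      rw [this]; exact hN
    · exact not_lt.1 (Nat.find_min hx (by omega))
  -- continuity of the pieces
  have hdH_cont : ∀ m, Continuous (dH m) := by
    intro m
    simp only [hdH_def, hu_def, div_eq_mul_inv]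
    fun_prop
  -- f has derivative g at every positive point
  have hderiv : ∀ x : ℝ, 0 < x → HasDerivAt f (g x) x := by
    intro x hx0
    rcases lt_or_ge (ε n₀) x with hgt | hle
    · have hev : f =ᶠ[𝓝 x] fun _ => r n₀ := by
        filter_upwards [Ioi_mem_nhds hgt] with y hy
        exact hf_const y (le_of_lt hy)
      rw [hg_const x hgt.le]
      exact (hasDerivAt_const x (r n₀)).congr_of_eventuallyEq hev
    · obtain ⟨m, hm, h1, h2⟩ := hcover x hx0 hle
      rcases lt_or_eq_of_le h2 with h2' | h2'
      · have hev : f =ᶠ[𝓝 x] H m := by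
          filter_upwards [Ioo_mem_nhds h1 h2'] with y hy
          exact hfH m hm y hy.1 hy.2.le
        rw [hgdH m hm x h1 h2]
        exact (hH_deriv m x).congr_of_eventuallyEq hev
      · -- x = ε m : junction point
        have hgx : g x = 0 := by rw [hgdH m hm x h1 h2, h2', hdH_right m]
        rw [hgx]
        have hfx : f x = H m x := hfH m hm x h1 h2
        have hL : HasDerivWithinAt f 0 (Iic x) x := by
          have hd0 : dH m x = 0 := by rw [h2']; exact hdH_right m
          refine (hd0 ▸ (hH_deriv m x).hasDerivWithinAt).congr_of_eventuallyEq ?_ hfx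
          filter_upwards [mem_nhdsWithin_of_mem_nhds (Ioi_mem_nhds h1),
            self_mem_nhdsWithin] with y hy1 hy2
          exact hfH m hm y hy1 (le_of_le_of_eq hy2 h2')
        have hR : HasDerivWithinAt f 0 (Ici x) x := by
          rcases eq_or_lt_of_le hm with hm' | hm'
          · -- m = n₀ : constant to the right
            refine ((hasDerivAt_const x (r n₀)).hasDerivWithinAt).congr ?_ ?_
            · intro y hy
              exact hf_const y (by rw [← hm'] at h2'; exact h2'.symm.le.trans hy)
            · rw [hfx, h2', hH_right, hm']
          · obtain ⟨k, rfl⟩ : ∃ k, m = k + 1 := ⟨m - 1, by omega⟩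
            have hk : n₀ ≤ k := by omega
            have hd0 : dH k x = 0 := by rw [h2']; exact hdH_left k
            refine (hd0 ▸ (hH_deriv k x).hasDerivWithinAt).congr_of_eventuallyEq ?_ ?_
            · have hxk : x < ε k := by rw [h2']; exact hε_anti (lt_add_one k)
              filter_upwards [mem_nhdsWithin_of_mem_nhds (Iio_mem_nhds hxk),
                self_mem_nhdsWithin] with y hy1 hy2
              exact hfH' k hk y (le_of_eq_of_le h2'.symm hy2) hy1.le
            · exact hfH' k hk x h2'.ge (by rw [h2']; exact (hε_anti (lt_add_one k)).le)
        have := hL.union hR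
        rwa [Iic_union_Ici, hasDerivWithinAt_univ] at this
  -- g is continuous at every positive point
  have hg_cont : ∀ x : ℝ, 0 < x → ContinuousAt g x := by
    intro x hx0
    rcases lt_or_ge (ε n₀) x with hgt | hle
    · have hev : g =ᶠ[𝓝 x] fun _ => (0:ℝ) := by
        filter_upwards [Ioi_mem_nhds hgt] with y hy
        exact hg_const y (le_of_lt hy)
      exact continuousAt_const.congr_of_eventuallyEq hev
    · obtain ⟨m, hm, h1, h2⟩ := hcover x hx0 hle
      rcases lt_or_eq_of_le h2 with h2' | h2'
      · have hev : g =ᶠ[𝓝 x] dH m := by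
          filter_upwards [Ioo_mem_nhds h1 h2'] with y hy
          exact hgdH m hm y hy.1 hy.2.le
        exact ((hdH_cont m).continuousAt).congr_of_eventuallyEq hev
      · have hgx : g x = dH m x := hgdH m hm x h1 h2
        have hL : ContinuousWithinAt g (Iic x) x := by
          refine ((hdH_cont m).continuousAt.continuousWithinAt).congr_of_eventuallyEq ?_ hgx
          filter_upwards [mem_nhdsWithin_of_mem_nhds (Ioi_mem_nhds h1),
            self_mem_nhdsWithin] with y hy1 hy2
          exact hgdH m hm y hy1 (le_of_le_of_eq hy2 h2')
        have hR : ContinuousWithinAt g (Ici x) x := by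
          rcases eq_or_lt_of_le hm with hm' | hm'
          · refine ((continuousAt_const (y := (0:ℝ))).continuousWithinAt).congr ?_ ?_
            · intro y hy
              exact hg_const y (by rw [← hm'] at h2'; exact h2'.symm.le.trans hy)
            · rw [hgx, h2', hdH_right]
          · obtain ⟨k, rfl⟩ : ∃ k, m = k + 1 := ⟨m - 1, by omega⟩
            have hk : n₀ ≤ k := by omega
            have hgx' : g x = dH k x := hgdH' k hk x h2'.ge
              (by rw [h2']; exact (hε_anti (lt_add_one k)).le)
            refine ((hdH_cont k).continuousAt.continuousWithinAt).congr_of_eventuallyEq ?_ hgx'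
            have hxk : x < ε k := by rw [h2']; exact hε_anti (lt_add_one k)
            filter_upwards [mem_nhdsWithin_of_mem_nhds (Iio_mem_nhds hxk),
              self_mem_nhdsWithin] with y hy1 hy2
            exact hgdH' k hk y (le_of_eq_of_le h2'.symm hy2) hy1.le
        have := hL.union hR
        rwa [Iic_union_Ici, continuousWithinAt_univ] at this
  -- g tends to 0 at 0⁺
  have hgtend : Tendsto g (𝓝[>] (0:ℝ)) (𝓝 0) := by
    rw [Metric.tendsto_nhdsWithin_nhds]
    intro δ hδ
    obtain ⟨N, hN⟩ := (Metric.tendsto_atTop.1 hs) (δ/2) (by linarith)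
    refine ⟨min (ε N) (ε n₀), lt_min (hε_mem N).1 (hε_mem n₀).1, ?_⟩
    intro y hy hyd
    have hy0 : 0 < y := hy
    rw [Real.dist_eq, sub_zero, abs_of_pos hy0] at hyd
    have hyn : y < ε N := lt_of_lt_of_le hyd (min_le_left _ _)
    have hyn0 : y ≤ ε n₀ := (lt_of_lt_of_le hyd (min_le_right _ _)).le
    obtain ⟨m, hm, h1, h2⟩ := hcover y hy0 hyn0
    have hmN : N ≤ m := by
      by_contra hlt
      push_neg at hlt
      have : ε N ≤ ε (m+1) := hε_anti.antitone (by omega)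
      linarith
    have hsm : |s m| < δ/2 := by
      have := hN m hmN
      rwa [Real.dist_eq, sub_zero] at this
    rw [Real.dist_eq, sub_zero, hgdH m hm y h1 h2]
    calc |dH m y| ≤ 3/2 * |s m| := hdH_bound m y h1.le h2
      _ < δ := by linarith [abs_nonneg (s m)]
  -- f tends to 0 at 0⁺
  have hftend : Tendsto f (𝓝[>] (0:ℝ)) (𝓝 0) := by
    rw [Metric.tendsto_nhdsWithin_nhds]
    intro δ hδ
    obtain ⟨N, hN⟩ := (Metric.tendsto_atTop.1 hr) (δ/3) (by linarith)
    refine ⟨min (ε N) (ε n₀), lt_min (hε_mem N).1 (hε_mem n₀).1, ?_⟩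
    intro y hy hyd
    have hy0 : 0 < y := hy
    rw [Real.dist_eq, sub_zero, abs_of_pos hy0] at hyd
    have hyn : y < ε N := lt_of_lt_of_le hyd (min_le_left _ _)
    have hyn0 : y ≤ ε n₀ := (lt_of_lt_of_le hyd (min_le_right _ _)).le
    obtain ⟨m, hm, h1, h2⟩ := hcover y hy0 hyn0
    have hmN : N ≤ m := by
      by_contra hlt
      push_neg at hlt
      have : ε N ≤ ε (m+1) := hε_anti.antitone (by omega)
      linarith
    have hrm : |r m| < δ/3 := by
      have := hN m hmN
      rwa [Real.dist_eq, sub_zero] at this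
    have hrm1 : |r (m+1)| < δ/3 := by
      have := hN (m+1) (hmN.trans (Nat.le_succ m))
      rwa [Real.dist_eq, sub_zero] at this
    rw [Real.dist_eq, sub_zero, hfH m hm y h1 h2]
    calc |H m y| ≤ |r m| + 2 * |r (m+1)| := hH_bound m y h1.le h2
      _ < δ := by linarith
  have hf0 : f 0 = 0 := hf_zero 0 le_rfl
  -- derivative at 0 from the right
  have hIci : HasDerivWithinAt f 0 (Ici (0:ℝ)) 0 := by
    apply hasDerivWithinAt_Ici_of_tendsto_deriv (s := Ioi (0:ℝ))
    · intro y hy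
      exact (hderiv y hy).differentiableAt.differentiableWithinAt
    · rw [ContinuousWithinAt, hf0]
      exact hftend
    · exact self_mem_nhdsWithin
    · refine Filter.Tendsto.congr' ?_ hgtend
      filter_upwards [self_mem_nhdsWithin] with y hy
      exact ((hderiv y hy).deriv).symm
  have hU : UniqueDiffOn ℝ (Icc (0:ℝ) 1) := uniqueDiffOn_Icc zero_lt_one
  have h0mem : (0:ℝ) ∈ Icc (0:ℝ) 1 := ⟨le_rfl, zero_le_one⟩
  have h0Icc : HasDerivWithinAt f 0 (Icc (0:ℝ) 1) 0 := hIci.mono Icc_subset_Ici_self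
  have hdw0 : derivWithin f (Icc (0:ℝ) 1) 0 = 0 := h0Icc.derivWithin (hU 0 h0mem)
  have hdwx : ∀ x ∈ Icc (0:ℝ) 1, 0 < x → derivWithin f (Icc (0:ℝ) 1) x = g x := by
    intro x hx hx0
    exact ((hderiv x hx0).hasDerivWithinAt).derivWithin (hU x hx)
  have hdiffOn : DifferentiableOn ℝ f (Icc (0:ℝ) 1) := by
    intro x hx
    rcases eq_or_lt_of_le hx.1 with h | h
    · exact h ▸ h0Icc.differentiableWithinAt
    · exact (hderiv x h).differentiableAt.differentiableWithinAt
  have hcont : ContinuousOn (derivWithin f (Icc (0:ℝ) 1)) (Icc (0:ℝ) 1) := by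
    intro x hx
    rcases eq_or_lt_of_le hx.1 with h | h
    · rw [← h]
      refine continuousWithinAt_diff_self.1 ?_
      rw [ContinuousWithinAt, hdw0]
      have hle : 𝓝[Icc (0:ℝ) 1 \ {0}] 0 ≤ 𝓝[>] (0:ℝ) :=
        nhdsWithin_mono _ (fun y hy => lt_of_le_of_ne hy.1.1 (Ne.symm hy.2))
      refine Filter.Tendsto.congr' ?_ (hgtend.mono_left hle)
      filter_upwards [self_mem_nhdsWithin] with y hy
      exact (hdwx y hy.1 (lt_of_le_of_ne hy.1.1 (Ne.symm hy.2))).symm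
    · refine ((hg_cont x h).continuousWithinAt).congr ?_ (hdwx x hx h)
      intro y hy
      rcases eq_or_lt_of_le hy.1 with h' | h'
      · rw [← h', hdw0, hg_zero 0 le_rfl]
      · exact hdwx y hy h'
  have hCD : ContDiffOn ℝ 1 f (Icc (0:ℝ) 1) := by
    rw [show (1 : WithTop ℕ∞) = 0 + 1 from rfl, contDiffOn_succ_iff_derivWithin hU]
    refine ⟨hdiffOn, by simp, contDiffOn_zero.2 hcont⟩
  exact ⟨f, hCD, hf0, hdw0, fun n hn => by
    rw [hfH n hn (ε n) (hε_anti (lt_add_one n)) le_rfl, hH_right]⟩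

/-- Interpolation lemma: a sequence `r n` can be interpolated at points `ε n`
by a `C¹` function on `[0,1]` vanishing to first order at `0` iff both
`r n → 0` and `(r n - r (n+1))/(ε n - ε (n+1)) → 0`. -/
theorem stmt0 (ε : ℕ → ℝ) (hε_anti : StrictAnti ε)
    (hε_mem : ∀ n, ε n ∈ Set.Ioc (0 : ℝ) 1)
    (hε_lim : Filter.Tendsto ε Filter.atTop (nhds 0))
    (r : ℕ → ℝ) (n₀ : ℕ) :
    (∃ f : ℝ → ℝ, ContDiffOn ℝ 1 f (Set.Icc 0 1) ∧ f 0 = 0 ∧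
        derivWithin f (Set.Icc 0 1) 0 = 0 ∧ ∀ n, n₀ ≤ n → f (ε n) = r n) ↔
      (Filter.Tendsto r Filter.atTop (nhds 0) ∧
        Filter.Tendsto (fun n => (r n - r (n + 1)) / (ε n - ε (n + 1)))
          Filter.atTop (nhds 0)) := by
  constructor
  · rintro ⟨f, hf, hf0, hfd0, hfe⟩
    exact fwd_aux ε hε_anti hε_mem hε_lim r n₀ f hf hf0 hfd0 hfe
  · rintro ⟨hr, hs⟩
    exact bwd_aux ε hε_anti hε_mem hε_lim r n₀ hr hs
end

section
/- Let X be a real random variable with CGF K finite on an open interval containing ŝ, and suppose K'(ŝ) = x and the characteristic function φ ↦ M(ŝ + iφ) is integrable over ℝ. Then the density f of X at x satisfies the exact factorization f(x) = exp(K(ŝ) − ŝ x) · P(ŝ), where P(ŝ) = (2π)^{-1} ∫_ℝ exp( K(ŝ + iφ) − K(ŝ) − iφ K'(ŝ) ) dφ. -/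
open MeasureTheory Real
open scoped ENNReal NNReal FourierTransform

/-- Exact tilting factorization of the density via Fourier inversion:
`f(x) = exp(K(shat) - shatx) · P(shat)` where `P(shat)` is the inversion integral for the
tilted distribution at its mean, interpreted through `M(shat+iφ)/M(shat)` and the
saddlepoint relation `K'(shat) = x`. -/
theorem stmt4 (f : ℝ → ℝ) (hf_nonneg : ∀ x, 0 ≤ f x)
    (μ : Measure ℝ)
    (hμ : μ = MeasureTheory.volume.withDensity fun x => ENNReal.ofReal (f x))
    [IsProbabilityMeasure μ]
    (S : Set ℝ) (hS : IsOpen S) (shat : ℝ) (hshat : shat ∈ S)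
    (hint : ∀ s ∈ S, Integrable (fun x => Real.exp (s * x)) μ)
    (K : ℝ → ℝ) (hK : ∀ s, K s = Real.log (∫ x, Real.exp (s * x) ∂μ))
    (x : ℝ) (hsaddle : HasDerivAt K x shat)
    (Mc : ℂ → ℂ) (hMc : ∀ z, Mc z = ∫ t, Complex.exp (z * t) ∂μ)
    (hchar_int : Integrable (fun φ : ℝ => Mc (shat + Complex.I * φ)))
    (hcont : ContinuousAt f x) :
    (f x : ℂ) = Real.exp (K shat - shat * x) *
      ((2 * Real.pi)⁻¹ •
        ∫ φ : ℝ, (Mc (shat + Complex.I * φ) / Mc shat) *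
          Complex.exp (-(Complex.I * φ * x))) := by
  classical
  have hac : μ ≪ (volume : Measure ℝ) := hμ ▸ withDensity_absolutelyContinuous _ _
  set ρ : ℝ → ℝ≥0∞ := μ.rnDeriv volume with hρdef
  have hρmeas : Measurable ρ := Measure.measurable_rnDeriv _ _
  have hρfin : ∀ᵐ t, ρ t < ⊤ := Measure.rnDeriv_lt_top μ volume
  have hμρ : volume.withDensity ρ = μ := Measure.withDensity_rnDeriv_eq μ volume hac
  -- continuity data
  have hcont' : ∀ n : ℕ, ∃ δ > 0, ∀ t : ℝ, dist t x < δ → |f t - f x| < 1/(n+1) := by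
    intro n
    obtain ⟨δ, hδ, h⟩ := Metric.continuousAt_iff.1 hcont (1/(n+1)) (by positivity)
    exact ⟨δ, hδ, fun t ht => by simpa [Real.dist_eq] using h ht⟩
  choose δ hδpos hδ using hcont'
  -- a.e. bounds on ρ on the balls
  have hub : ∀ n : ℕ, ∀ᵐ t, t ∈ Metric.ball x (δ n) →
      (ρ t ≤ ENNReal.ofReal (f x + 1/(n+1)) ∧ ENNReal.ofReal (f x - 1/(n+1)) ≤ ρ t) := by
    intro n
    set B := Metric.ball x (δ n) with hB
    have hBmeas : MeasurableSet B := measurableSet_ball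
    have key : ∀ s : Set ℝ, MeasurableSet s →
        ∫⁻ t in s ∩ B, ρ t = ∫⁻ t in s ∩ B, ENNReal.ofReal (f t) := by
      intro s hs
      rw [← withDensity_apply ρ (hs.inter hBmeas), hμρ, hμ,
        withDensity_apply _ (hs.inter hBmeas)]
    have h1 : ρ ≤ᵐ[volume.restrict B] fun _ => ENNReal.ofReal (f x + 1/(n+1)) := by
      apply ae_le_of_forall_setLIntegral_le_of_sigmaFinite hρmeas
      intro s hs _
      rw [Measure.restrict_restrict hs, key s hs]
      apply setLIntegral_mono' (hs.inter hBmeas)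
      intro t ht
      apply ENNReal.ofReal_le_ofReal
      have h := abs_le.1 (hδ n t (by simpa [hB, Metric.mem_ball] using ht.2)).le
      linarith [h.2]
    have h2 : (fun _ : ℝ => ENNReal.ofReal (f x - 1/(n+1))) ≤ᵐ[volume.restrict B] ρ := by
      apply ae_le_of_forall_setLIntegral_le_of_sigmaFinite measurable_const
      intro s hs _
      rw [Measure.restrict_restrict hs, key s hs]
      apply setLIntegral_mono' (hs.inter hBmeas)
      intro t ht
      apply ENNReal.ofReal_le_ofReal
      have h := abs_le.1 (hδ n t (by simpa [hB, Metric.mem_ball] using ht.2)).le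
      linarith [h.1]
    have h1' := (ae_restrict_iff' hBmeas).1 h1
    have h2' := (ae_restrict_iff' hBmeas).1 h2
    filter_upwards [h1', h2'] with t ht1 ht2 htB
    exact ⟨ht1 htB, ht2 htB⟩
  have hae : ∀ᵐ t, (∀ n : ℕ, t ∈ Metric.ball x (δ n) →
      (ρ t ≤ ENNReal.ofReal (f x + 1/(n+1)) ∧ ENNReal.ofReal (f x - 1/(n+1)) ≤ ρ t))
      ∧ ρ t < ⊤ := (ae_all_iff.2 hub).and hρfin
  rw [ae_iff] at hae
  obtain ⟨N, hNsub, hNmeas, hNnull⟩ := exists_measurable_superset_of_null hae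
  set d : ℝ → ℝ := (N ∪ {x}).piecewise (fun _ => f x) (fun t => (ρ t).toReal) with hd_def
  have hdmeas : Measurable d :=
    Measurable.piecewise (hNmeas.union (measurableSet_singleton x)) measurable_const
      hρmeas.ennreal_toReal
  have hNx_null : volume (N ∪ {x}) = 0 :=
    measure_union_null hNnull (measure_singleton x)
  have hd_ae : d =ᵐ[volume] fun t => (ρ t).toReal := by
    filter_upwards [measure_eq_zero_iff_ae_notMem.1 hNx_null] with t ht
    exact Set.piecewise_eq_of_notMem _ _ _ ht
  have hdx : d x = f x := Set.piecewise_eq_of_mem _ _ _ (Or.inr rfl)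
  have hd_cont : ContinuousAt d x := by
    rw [Metric.continuousAt_iff]
    intro ε hε
    obtain ⟨n, hn⟩ := exists_nat_one_div_lt hε
    refine ⟨δ n, hδpos n, fun {t} ht => ?_⟩
    rw [hdx, Real.dist_eq]
    have hband : |d t - f x| ≤ 1/(n+1) := by
      by_cases htN : t ∈ N ∪ {x}
      · have hdt : d t = f x := Set.piecewise_eq_of_mem _ _ _ htN
        rw [hdt]
        simp only [sub_self, abs_zero]
        positivity
      · have hP : ¬ ¬ ((∀ m : ℕ, t ∈ Metric.ball x (δ m) →
            (ρ t ≤ ENNReal.ofReal (f x + 1/(m+1)) ∧ ENNReal.ofReal (f x - 1/(m+1)) ≤ ρ t))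
            ∧ ρ t < ⊤) := fun hc => (htN (Or.inl (hNsub hc)))
        rw [not_not] at hP
        obtain ⟨hPb, hPfin⟩ := hP
        obtain ⟨hup, hlo⟩ := hPb n (by simpa [Metric.mem_ball] using ht)
        have hdt : d t = (ρ t).toReal := Set.piecewise_eq_of_notMem _ _ _ htN
        rw [hdt]
        rw [abs_le]
        constructor
        · by_cases hsgn : f x - 1/(n+1) ≤ 0
          · have : (0:ℝ) ≤ (ρ t).toReal := ENNReal.toReal_nonneg
            linarith
          · have : f x - 1/(n+1) ≤ (ρ t).toReal :=
              (ENNReal.ofReal_le_iff_le_toReal hPfin.ne).1 hlo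
            linarith
        · have h0 : (0:ℝ) < 1/((n:ℝ)+1) := by positivity
          have h1 : (ρ t).toReal ≤ f x + 1/((n:ℝ)+1) :=
            ENNReal.toReal_le_of_le_ofReal (by linarith [hf_nonneg x]) hup
          linarith
    exact lt_of_le_of_lt hband hn
  -- Fourier inversion part
  set ρₙ : ℝ → NNReal := fun t => (ρ t).toNNReal with hρₙdef
  have hρₙmeas : Measurable ρₙ := hρmeas.ennreal_toNNReal
  have hμρₙ : volume.withDensity (fun t => ((ρₙ t : ℝ≥0∞))) = μ := by
    rw [withDensity_congr_ae (f := fun t => ((ρₙ t : ℝ≥0∞))) (g := ρ)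
      (hρfin.mono fun t ht => ENNReal.coe_toNNReal ht.ne), hμρ]
  have key : ∀ z : ℂ, Mc z = ∫ t : ℝ, ρₙ t • Complex.exp (z * t) := by
    intro z
    rw [hMc z, ← hμρₙ, integral_withDensity_eq_integral_smul hρₙmeas]
  set g : ℝ → ℂ := fun t => (d t : ℝ) • Complex.exp ((shat : ℂ) * t) with hg_def
  have hg_cont : ContinuousAt g x := by
    apply ContinuousAt.smul hd_cont
    exact (Complex.continuous_exp.comp
      (continuous_const.mul Complex.continuous_ofReal)).continuousAt
  have hg_ae : g =ᵐ[volume] fun t => ρₙ t • Complex.exp ((shat : ℂ) * t) := by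
    filter_upwards [hd_ae] with t ht
    rw [hg_def]
    simp only [ht, NNReal.smul_def]
    rfl
  have hexpμ : Integrable (fun t : ℝ => Complex.exp ((shat : ℂ) * t)) μ := by
    have h1 : Integrable (fun t : ℝ => ((Real.exp (shat * t) : ℝ) : ℂ)) μ :=
      (hint shat hshat).ofReal
    apply h1.congr
    filter_upwards with t
    rw [Complex.ofReal_exp, Complex.ofReal_mul]
  have hg_int : Integrable g volume := by
    apply (Integrable.congr _ hg_ae.symm)
    rw [← hμρₙ] at hexpμ
    exact (integrable_withDensity_iff_integrable_smul hρₙmeas).1 hexpμ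
  have hFour : ∀ w : ℝ, 𝓕 g w = Mc (↑shat + Complex.I * ↑((-(2 * Real.pi)) * w)) := by
    intro w
    rw [Real.fourier_real_eq_integral_exp_smul, key]
    apply integral_congr_ae
    filter_upwards [hd_ae] with v hv
    have hcoe : ((ρₙ v : ℝ) : ℂ) = ((ρ v).toReal : ℂ) := rfl
    simp only [hg_def, hv, NNReal.smul_def, Complex.real_smul, smul_eq_mul, hcoe]
    rw [mul_left_comm, ← Complex.exp_add]
    congr 2
    push_cast
    ring
  have hFourInt : Integrable (𝓕 g) volume := by
    rw [show 𝓕 g = fun w => Mc (↑shat + Complex.I * ↑((-(2 * Real.pi)) * w)) from funext hFour]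
    exact hchar_int.comp_mul_left' (R := -(2 * Real.pi)) (neg_ne_zero.2 (by positivity))
  have hInv := hg_int.fourierInv_fourier_eq hFourInt hg_cont
  have hInv_eq : 𝓕⁻ (𝓕 g) x =
      (2 * Real.pi)⁻¹ • ∫ φ : ℝ, Mc (↑shat + Complex.I * φ) *
        Complex.exp (-(Complex.I * φ * x)) := by
    rw [Real.fourierInv_eq_fourier_neg,
      Real.fourier_real_eq_integral_exp_smul]
    have heq : ∀ w : ℝ, Complex.exp (↑(-2 * Real.pi * w * (-x)) * Complex.I) • 𝓕 g w =
        (fun φ : ℝ => Mc (↑shat + Complex.I * φ) * Complex.exp (-(Complex.I * φ * x)))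
          ((-(2 * Real.pi)) * w) := by
      intro w
      rw [hFour w]
      simp only [smul_eq_mul]
      rw [mul_comm]
      congr 1
      congr 1
      push_cast
      ring
    rw [integral_congr_ae (ae_of_all _ heq),
      MeasureTheory.Measure.integral_comp_mul_left
        (fun φ : ℝ => Mc (↑shat + Complex.I * φ) * Complex.exp (-(Complex.I * φ * x)))
        (-(2 * Real.pi))]
    rw [show |(-(2 * Real.pi))⁻¹| = (2 * Real.pi)⁻¹ by
      rw [abs_inv, abs_neg, abs_of_pos (by positivity)]]
  rw [hInv] at hInv_eq
  have hmain : (f x : ℂ) * Complex.exp ((shat : ℂ) * x) =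
      (2 * Real.pi)⁻¹ • ∫ φ : ℝ, Mc (↑shat + Complex.I * φ) *
        Complex.exp (-(Complex.I * φ * x)) := by
    rw [← hInv_eq, hg_def]
    simp only [hdx, Complex.real_smul]
  -- algebraic conclusion
  have hNeZero : NeZero μ := ⟨IsProbabilityMeasure.ne_zero μ⟩
  have hMpos : 0 < ∫ t, Real.exp (shat * t) ∂μ :=
    integral_exp_pos (hint shat hshat)
  set M : ℝ := ∫ t, Real.exp (shat * t) ∂μ with hM_def
  have hMc_shat : Mc (shat : ℂ) = (M : ℂ) := by
    have hcast : ∫ t, ((Real.exp (shat * t) : ℝ) : ℂ) ∂μ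
        = ((∫ t, Real.exp (shat * t) ∂μ : ℝ) : ℂ) := integral_ofReal
    rw [hMc, hM_def, ← hcast]
    apply integral_congr_ae
    filter_upwards with t
    rw [Complex.ofReal_exp, Complex.ofReal_mul]
  have hKs : Real.exp (K shat) = M := by
    rw [hK]
    exact Real.exp_log hMpos
  have hdiv : ∫ φ : ℝ, (Mc (shat + Complex.I * φ) / Mc shat) *
      Complex.exp (-(Complex.I * φ * x)) =
      (∫ φ : ℝ, Mc (↑shat + Complex.I * φ) * Complex.exp (-(Complex.I * φ * x))) / Mc shat := by
    rw [← integral_div]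
    apply integral_congr_ae
    filter_upwards with φ
    rw [div_mul_eq_mul_div]
  rw [hdiv, hMc_shat, ← smul_div_assoc, ← hmain]
  have hexpx : Complex.exp ((shat : ℂ) * x) = ((Real.exp (shat * x) : ℝ) : ℂ) := by
    rw [Complex.ofReal_exp, Complex.ofReal_mul]
  rw [hexpx]
  have hMne : (M : ℝ) ≠ 0 := ne_of_gt hMpos
  have hexpne : Real.exp (shat * x) ≠ 0 := Real.exp_ne_zero _
  rw [show Real.exp (K shat - shat * x) = M / Real.exp (shat * x) by
    rw [Real.exp_sub, hKs]]
  have h1 : (M : ℂ) ≠ 0 := by exact_mod_cast hMne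
  have h2 : Complex.exp ((shat : ℂ) * x) ≠ 0 := Complex.exp_ne_zero _
  rw [← hexpx]
  push_cast
  field_simp
end

section
/- Under the hypotheses of the preceding setup (K twice differentiable, K'' positive definite, ŝ solving K'(ŝ;θ)=x), the θ-Hessian of log L̂*(θ;x) = K(ŝ(θ;x);θ) − ŝ(θ;x)·x equals ∇²_θ K(ŝ;θ) − (∇_s∇_θ K(ŝ;θ))ᵀ K''(ŝ;θ)^{-1} (∇_s∇_θ K(ŝ;θ)), evaluated at ŝ = ŝ(θ;x). -/
open Matrix Real

/-- The `s`-Hessian of a function on `ℝ^m`. -/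
noncomputable def sHess {m : ℕ} (K : (Fin m → ℝ) → ℝ) (s : Fin m → ℝ) :
    Matrix (Fin m) (Fin m) ℝ :=
  Matrix.of fun i j =>
    fderiv ℝ (fun u => fderiv ℝ K u (Pi.single j 1)) s (Pi.single i 1)

section AuxSPA

variable {m p : ℕ}

/-- first-slot partial derivative equals full derivative composed with inclusion -/
lemma partial_fst (K : (Fin m → ℝ) → (Fin p → ℝ) → ℝ)
    (hK : Differentiable ℝ (fun q : (Fin m → ℝ) × (Fin p → ℝ) => K q.1 q.2))
    (s₀ : Fin m → ℝ) (θ : Fin p → ℝ) (v : Fin m → ℝ) :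
    fderiv ℝ (fun s => K s θ) s₀ v
      = fderiv ℝ (fun q : (Fin m → ℝ) × (Fin p → ℝ) => K q.1 q.2) (s₀, θ) (v, 0) := by
  have hc : HasFDerivAt (fun s : Fin m → ℝ => (s, θ))
      ((ContinuousLinearMap.id ℝ (Fin m → ℝ)).prod 0) s₀ :=
    (hasFDerivAt_id s₀).prodMk (hasFDerivAt_const θ s₀)
  have h : HasFDerivAt (fun s => K s θ)
      ((fderiv ℝ (fun q : (Fin m → ℝ) × (Fin p → ℝ) => K q.1 q.2) (s₀, θ)).comp
        ((ContinuousLinearMap.id ℝ (Fin m → ℝ)).prod 0)) s₀ := by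
    exact (hK (s₀, θ)).hasFDerivAt.comp s₀ hc
  rw [h.fderiv]
  simp

lemma partial_snd (K : (Fin m → ℝ) → (Fin p → ℝ) → ℝ)
    (hK : Differentiable ℝ (fun q : (Fin m → ℝ) × (Fin p → ℝ) => K q.1 q.2))
    (s₀ : Fin m → ℝ) (θ : Fin p → ℝ) (v : Fin p → ℝ) :
    fderiv ℝ (fun θ' => K s₀ θ') θ v
      = fderiv ℝ (fun q : (Fin m → ℝ) × (Fin p → ℝ) => K q.1 q.2) (s₀, θ) (0, v) := by
  have hc : HasFDerivAt (fun θ' : Fin p → ℝ => (s₀, θ'))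
      ((0 : (Fin p → ℝ) →L[ℝ] (Fin m → ℝ)).prod (ContinuousLinearMap.id ℝ (Fin p → ℝ))) θ :=
    (hasFDerivAt_const s₀ θ).prodMk (hasFDerivAt_id θ)
  have h : HasFDerivAt (fun θ' => K s₀ θ')
      ((fderiv ℝ (fun q : (Fin m → ℝ) × (Fin p → ℝ) => K q.1 q.2) (s₀, θ)).comp
        ((0 : (Fin p → ℝ) →L[ℝ] (Fin m → ℝ)).prod (ContinuousLinearMap.id ℝ (Fin p → ℝ)))) θ := by
    exact (hK (s₀, θ)).hasFDerivAt.comp θ hc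
  rw [h.fderiv]
  simp

/-- chain rule for an applied first derivative of a C² function -/
lemma fderiv_fderiv_comp {EE FF : Type*} [NormedAddCommGroup EE] [NormedSpace ℝ EE]
    [NormedAddCommGroup FF] [NormedSpace ℝ FF]
    {G : FF → ℝ} (hG : ContDiff ℝ 2 G) {c : EE → FF} {c' : EE →L[ℝ] FF} {x₀ : EE}
    (hc : HasFDerivAt c c' x₀) (w : FF) (v : EE) :
    fderiv ℝ (fun t => fderiv ℝ G (c t) w) x₀ v
      = fderiv ℝ (fderiv ℝ G) (c x₀) (c' v) w := by
  have hG' : Differentiable ℝ (fderiv ℝ G) :=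
    (hG.fderiv_right (m := 1) (by norm_num)).differentiable (by norm_num)
  have h1 : HasFDerivAt (fun t => fderiv ℝ G (c t))
      ((fderiv ℝ (fderiv ℝ G) (c x₀)).comp c') x₀ := by
    exact (hG' (c x₀)).hasFDerivAt.comp x₀ hc
  have h2 := h1.clm_apply (hasFDerivAt_const w x₀)
  rw [h2.fderiv]
  simp

/-- dot product with a fixed vector, as a continuous linear map -/
noncomputable def dotCLM (x : Fin m → ℝ) : (Fin m → ℝ) →L[ℝ] ℝ :=
  ∑ b, x b • ContinuousLinearMap.proj b

lemma dotCLM_apply (x y : Fin m → ℝ) : dotCLM x y = y ⬝ᵥ x := by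
  simp [dotCLM, dotProduct, ContinuousLinearMap.sum_apply, mul_comm]

end AuxSPA

/-- The θ-Hessian of `log L̂*(θ;x) = K(ŝ(θ);θ) - ŝ(θ)·x` equals
`∇²_θK - (∇_s∇_θK)ᵀ K''⁻¹ (∇_s∇_θK)`, evaluated at `(ŝ(θ₀), θ₀)`. -/
theorem stmt9 {m p : ℕ} (K : (Fin m → ℝ) → (Fin p → ℝ) → ℝ)
    (hK : ContDiff ℝ 2 (fun q : (Fin m → ℝ) × (Fin p → ℝ) => K q.1 q.2))
    (x : Fin m → ℝ) (θ₀ : Fin p → ℝ) (U : Set (Fin p → ℝ)) (hU : U ∈ nhds θ₀)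
    (shat : (Fin p → ℝ) → (Fin m → ℝ)) (hshat : ∀ θ ∈ U, DifferentiableAt ℝ shat θ)
    (hposdef : (sHess (fun s => K s θ₀) (shat θ₀)).PosDef)
    (hsaddle : ∀ θ ∈ U, ∀ v, fderiv ℝ (fun s => K s θ) (shat θ) v = x ⬝ᵥ v) :
    let A : Matrix (Fin m) (Fin m) ℝ := sHess (fun s => K s θ₀) (shat θ₀)
    let B : Matrix (Fin m) (Fin p) ℝ := Matrix.of fun a j =>
      fderiv ℝ (fun θ => fderiv ℝ (fun s => K s θ) (shat θ₀) (Pi.single a 1)) θ₀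
        (Pi.single j 1)
    let D : Matrix (Fin p) (Fin p) ℝ := Matrix.of fun i j =>
      fderiv ℝ (fun θ => fderiv ℝ (fun θ' => K (shat θ₀) θ') θ (Pi.single j 1)) θ₀
        (Pi.single i 1)
    (Matrix.of fun i j : Fin p =>
        fderiv ℝ
          (fun θ => fderiv ℝ (fun θ' => K (shat θ') θ' - shat θ' ⬝ᵥ x) θ (Pi.single j 1))
          θ₀ (Pi.single i 1))
      = D - Bᵀ * A⁻¹ * B := by
  intro A B D
  have hθ₀U : θ₀ ∈ U := mem_of_mem_nhds hU
  have hFd : Differentiable ℝ (fun q : (Fin m → ℝ) × (Fin p → ℝ) => K q.1 q.2) :=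
    hK.differentiable (by norm_num)
  have hf'd : Differentiable ℝ (fderiv ℝ (fun q : (Fin m → ℝ) × (Fin p → ℝ) => K q.1 q.2)) :=
    (hK.fderiv_right (m := 1) (by norm_num)).differentiable (by norm_num)
  set H := fderiv ℝ (fderiv ℝ (fun q : (Fin m → ℝ) × (Fin p → ℝ) => K q.1 q.2)) (shat θ₀, θ₀)
    with hH
  have hHsymm : ∀ u v, H u v = H v u := fun u v =>
    second_derivative_symmetric (fun y => (hFd y).hasFDerivAt)
      (hf'd (shat θ₀, θ₀)).hasFDerivAt u v
  set S := fderiv ℝ shat θ₀ with hS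
  have hsd : HasFDerivAt shat S θ₀ := (hshat θ₀ hθ₀U).hasFDerivAt
  have hcθ₀ : HasFDerivAt (fun t => (shat t, t))
      (S.prod (ContinuousLinearMap.id ℝ (Fin p → ℝ))) θ₀ := hsd.prodMk (hasFDerivAt_id θ₀)
  -- A entries
  have hA : ∀ a b : Fin m, A a b
      = H ((Pi.single a 1 : Fin m → ℝ), (0 : Fin p → ℝ))
          ((Pi.single b 1 : Fin m → ℝ), (0 : Fin p → ℝ)) := by
    intro a b
    have hfun : (fun u => fderiv ℝ (fun s => K s θ₀) u (Pi.single b 1))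
        = fun u : Fin m → ℝ => fderiv ℝ (fun q : (Fin m → ℝ) × (Fin p → ℝ) => K q.1 q.2) (u, θ₀)
            ((Pi.single b 1 : Fin m → ℝ), (0 : Fin p → ℝ)) := by
      funext u; exact partial_fst K hFd u θ₀ _
    show fderiv ℝ (fun u => fderiv ℝ (fun s => K s θ₀) u (Pi.single b 1)) (shat θ₀)
        (Pi.single a 1) = _
    rw [hfun]
    have hc : HasFDerivAt (fun u : Fin m → ℝ => (u, θ₀))
        ((ContinuousLinearMap.id ℝ (Fin m → ℝ)).prod 0) (shat θ₀) :=
      (hasFDerivAt_id _).prodMk (hasFDerivAt_const θ₀ _)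
    have h := fderiv_fderiv_comp hK hc
      ((Pi.single b 1 : Fin m → ℝ), (0 : Fin p → ℝ)) (Pi.single a 1)
    rw [hH]
    simpa using h
  -- B entries
  have hB : ∀ (a : Fin m) (j : Fin p), B a j
      = H ((0 : Fin m → ℝ), Pi.single j 1)
          ((Pi.single a 1 : Fin m → ℝ), (0 : Fin p → ℝ)) := by
    intro a j
    have hfun : (fun θ => fderiv ℝ (fun s => K s θ) (shat θ₀) (Pi.single a 1))
        = fun θ : Fin p → ℝ => fderiv ℝ (fun q : (Fin m → ℝ) × (Fin p → ℝ) => K q.1 q.2)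
            (shat θ₀, θ) ((Pi.single a 1 : Fin m → ℝ), (0 : Fin p → ℝ)) := by
      funext θ; exact partial_fst K hFd (shat θ₀) θ _
    show fderiv ℝ (fun θ => fderiv ℝ (fun s => K s θ) (shat θ₀) (Pi.single a 1)) θ₀
        (Pi.single j 1) = _
    rw [hfun]
    have hc : HasFDerivAt (fun θ : Fin p → ℝ => ((shat θ₀ : Fin m → ℝ), θ))
        ((0 : (Fin p → ℝ) →L[ℝ] (Fin m → ℝ)).prod (ContinuousLinearMap.id ℝ (Fin p → ℝ))) θ₀ :=
      (hasFDerivAt_const _ _).prodMk (hasFDerivAt_id _)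
    have h := fderiv_fderiv_comp hK hc
      ((Pi.single a 1 : Fin m → ℝ), (0 : Fin p → ℝ)) (Pi.single j 1)
    rw [hH]
    simpa using h
  -- D entries
  have hD : ∀ i j : Fin p, D i j
      = H ((0 : Fin m → ℝ), Pi.single i 1) ((0 : Fin m → ℝ), Pi.single j 1) := by
    intro i j
    have hfun : (fun θ => fderiv ℝ (fun θ' => K (shat θ₀) θ') θ (Pi.single j 1))
        = fun θ : Fin p → ℝ => fderiv ℝ (fun q : (Fin m → ℝ) × (Fin p → ℝ) => K q.1 q.2)
            (shat θ₀, θ) ((0 : Fin m → ℝ), Pi.single j 1) := by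
      funext θ; exact partial_snd K hFd (shat θ₀) θ _
    show fderiv ℝ (fun θ => fderiv ℝ (fun θ' => K (shat θ₀) θ') θ (Pi.single j 1)) θ₀
        (Pi.single i 1) = _
    rw [hfun]
    have hc : HasFDerivAt (fun θ : Fin p → ℝ => ((shat θ₀ : Fin m → ℝ), θ))
        ((0 : (Fin p → ℝ) →L[ℝ] (Fin m → ℝ)).prod (ContinuousLinearMap.id ℝ (Fin p → ℝ))) θ₀ :=
      (hasFDerivAt_const _ _).prodMk (hasFDerivAt_id _)
    have h := fderiv_fderiv_comp hK hc
      ((0 : Fin m → ℝ), (Pi.single j 1 : Fin p → ℝ)) (Pi.single i 1)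
    rw [hH]
    simpa using h
  -- differentiated saddle equation
  have hsad0 : ∀ (i : Fin p) (a : Fin m),
      H (S (Pi.single i 1), (Pi.single i 1 : Fin p → ℝ))
        ((Pi.single a 1 : Fin m → ℝ), (0 : Fin p → ℝ)) = 0 := by
    intro i a
    have heq : (fun θ => fderiv ℝ (fun q : (Fin m → ℝ) × (Fin p → ℝ) => K q.1 q.2)
          (shat θ, θ) ((Pi.single a 1 : Fin m → ℝ), (0 : Fin p → ℝ)))
        =ᶠ[nhds θ₀] (fun _ => x ⬝ᵥ Pi.single a 1) := by
      filter_upwards [hU] with θ hθ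
      rw [← partial_fst K hFd (shat θ) θ]
      exact hsaddle θ hθ _
    have h0 : fderiv ℝ (fun θ => fderiv ℝ (fun q : (Fin m → ℝ) × (Fin p → ℝ) => K q.1 q.2)
        (shat θ, θ) ((Pi.single a 1 : Fin m → ℝ), (0 : Fin p → ℝ))) θ₀ = 0 := by
      rw [heq.fderiv_eq]; exact fderiv_const_apply _
    have h := fderiv_fderiv_comp hK hcθ₀
      ((Pi.single a 1 : Fin m → ℝ), (0 : Fin p → ℝ)) (Pi.single i 1)
    rw [hH]
    have h' : fderiv ℝ (fderiv ℝ (fun q : (Fin m → ℝ) × (Fin p → ℝ) => K q.1 q.2))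
        (shat θ₀, θ₀) (S (Pi.single i 1), (Pi.single i 1 : Fin p → ℝ))
        ((Pi.single a 1 : Fin m → ℝ), (0 : Fin p → ℝ)) = 0 := by
      rw [← (by simpa using h :
        fderiv ℝ (fun θ => fderiv ℝ (fun q : (Fin m → ℝ) × (Fin p → ℝ) => K q.1 q.2)
          (shat θ, θ) ((Pi.single a 1 : Fin m → ℝ), (0 : Fin p → ℝ))) θ₀ (Pi.single i 1)
          = fderiv ℝ (fderiv ℝ (fun q : (Fin m → ℝ) × (Fin p → ℝ) => K q.1 q.2))
            (shat θ₀, θ₀) (S (Pi.single i 1), (Pi.single i 1 : Fin p → ℝ))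
            ((Pi.single a 1 : Fin m → ℝ), (0 : Fin p → ℝ)))]
      rw [h0]; rfl
    exact h'
  -- gradient of the log-likelihood on U
  have hgrad : ∀ θ ∈ U, ∀ j : Fin p,
      fderiv ℝ (fun θ' => K (shat θ') θ' - shat θ' ⬝ᵥ x) θ (Pi.single j 1)
        = fderiv ℝ (fun q : (Fin m → ℝ) × (Fin p → ℝ) => K q.1 q.2) (shat θ, θ)
            ((0 : Fin m → ℝ), Pi.single j 1) := by
    intro θ hθ j
    have hsθ : HasFDerivAt shat (fderiv ℝ shat θ) θ := (hshat θ hθ).hasFDerivAt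
    have hcθ : HasFDerivAt (fun t => (shat t, t))
        ((fderiv ℝ shat θ).prod (ContinuousLinearMap.id ℝ (Fin p → ℝ))) θ :=
      hsθ.prodMk (hasFDerivAt_id θ)
    have h1 : HasFDerivAt (fun θ' => K (shat θ') θ')
        ((fderiv ℝ (fun q : (Fin m → ℝ) × (Fin p → ℝ) => K q.1 q.2) (shat θ, θ)).comp
          ((fderiv ℝ shat θ).prod (ContinuousLinearMap.id ℝ (Fin p → ℝ)))) θ := by
      have := HasFDerivAt.comp (f := fun t : Fin p → ℝ => (shat t, t)) θ
        (hFd _).hasFDerivAt hcθ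
      exact this
    have h2 : HasFDerivAt (fun θ' => shat θ' ⬝ᵥ x) ((dotCLM x).comp (fderiv ℝ shat θ)) θ := by
      have h3 := ((dotCLM x).hasFDerivAt (x := shat θ)).comp θ hsθ
      apply h3.congr_of_eventuallyEq
      filter_upwards with t
      simp [Function.comp, dotCLM_apply]
    have h4 := HasFDerivAt.fderiv (f := fun θ' => K (shat θ') θ' - shat θ' ⬝ᵥ x) (h1.sub h2)
    rw [h4]
    simp only [ContinuousLinearMap.coe_sub', Pi.sub_apply, ContinuousLinearMap.coe_comp',
      Function.comp_apply, ContinuousLinearMap.prod_apply, ContinuousLinearMap.coe_id', id_eq,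
      dotCLM_apply]
    have hsplit : ((fderiv ℝ shat θ (Pi.single j 1), (Pi.single j 1 : Fin p → ℝ)) :
        (Fin m → ℝ) × (Fin p → ℝ))
        = (fderiv ℝ shat θ (Pi.single j 1), (0 : Fin p → ℝ))
          + ((0 : Fin m → ℝ), Pi.single j 1) := by simp
    rw [hsplit, map_add]
    have hsad := hsaddle θ hθ (fderiv ℝ shat θ (Pi.single j 1))
    rw [partial_fst K hFd (shat θ) θ] at hsad
    rw [hsad, dotProduct_comm]
    ring
  -- Hessian entries
  have hHess : ∀ i j : Fin p,
      fderiv ℝ (fun θ => fderiv ℝ (fun θ' => K (shat θ') θ' - shat θ' ⬝ᵥ x) θ (Pi.single j 1))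
        θ₀ (Pi.single i 1)
      = H (S (Pi.single i 1), (Pi.single i 1 : Fin p → ℝ))
          ((0 : Fin m → ℝ), Pi.single j 1) := by
    intro i j
    have heq : (fun θ => fderiv ℝ (fun θ' => K (shat θ') θ' - shat θ' ⬝ᵥ x) θ (Pi.single j 1))
        =ᶠ[nhds θ₀] (fun θ => fderiv ℝ (fun q : (Fin m → ℝ) × (Fin p → ℝ) => K q.1 q.2)
            (shat θ, θ) ((0 : Fin m → ℝ), Pi.single j 1)) := by
      filter_upwards [hU] with θ hθ
      exact hgrad θ hθ j
    rw [heq.fderiv_eq]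
    have h := fderiv_fderiv_comp hK hcθ₀
      ((0 : Fin m → ℝ), (Pi.single j 1 : Fin p → ℝ)) (Pi.single i 1)
    rw [hH]
    simpa using h
  -- linear algebra
  have hAdet : IsUnit A.det := (Matrix.isUnit_iff_isUnit_det A).mp hposdef.isUnit
  have hAT : Aᵀ = A := by
    ext a b
    rw [Matrix.transpose_apply, hA, hA]
    exact hHsymm _ _
  have hAinvT : A⁻¹ᵀ = A⁻¹ := by rw [Matrix.transpose_nonsing_inv, hAT]
  have hAinvsymm : ∀ a b, A⁻¹ a b = A⁻¹ b a := by
    intro a b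
    conv_lhs => rw [← hAinvT]
    rw [Matrix.transpose_apply]
  have hHlin : ∀ (u : Fin m → ℝ) (L : (Fin m → ℝ) × (Fin p → ℝ)),
      H (u, (0 : Fin p → ℝ)) L
        = ∑ b, u b * H ((Pi.single b 1 : Fin m → ℝ), (0 : Fin p → ℝ)) L := by
    intro u L
    have hu : ((u, (0 : Fin p → ℝ)) : (Fin m → ℝ) × (Fin p → ℝ))
        = ∑ b, u b • (((Pi.single b 1 : Fin m → ℝ)), (0 : Fin p → ℝ)) := by
      have h1 : (∑ b, u b • (((Pi.single b 1 : Fin m → ℝ)), (0 : Fin p → ℝ))).1 = u := by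
        rw [Prod.fst_sum]
        funext c
        simp [Finset.sum_apply, Pi.single_apply]
      have h2 : (∑ b, u b • (((Pi.single b 1 : Fin m → ℝ)), (0 : Fin p → ℝ))).2
          = (0 : Fin p → ℝ) := by
        rw [Prod.snd_sum]
        simp
      exact Prod.ext h1.symm h2.symm
    rw [hu, map_sum, ContinuousLinearMap.sum_apply]
    refine Finset.sum_congr rfl fun b _ => ?_
    rw [_root_.map_smul, ContinuousLinearMap.smul_apply, smul_eq_mul]
  have hsplitH : ∀ (i : Fin p) (L : (Fin m → ℝ) × (Fin p → ℝ)),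
      H (S (Pi.single i 1), (Pi.single i 1 : Fin p → ℝ)) L
        = H (S (Pi.single i 1), (0 : Fin p → ℝ)) L
          + H ((0 : Fin m → ℝ), (Pi.single i 1 : Fin p → ℝ)) L := by
    intro i L
    have h : ((S (Pi.single i 1), (Pi.single i 1 : Fin p → ℝ)) : (Fin m → ℝ) × (Fin p → ℝ))
        = (S (Pi.single i 1), (0 : Fin p → ℝ)) + ((0 : Fin m → ℝ), Pi.single i 1) := by
      simp
    rw [h, map_add, ContinuousLinearMap.add_apply]
  have hmul : ∀ i : Fin p, A *ᵥ (S (Pi.single i 1)) = fun a => -(B a i) := by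
    intro i
    funext a
    have h1 := hsad0 i a
    rw [hsplitH, hHlin, ← hB a i] at h1
    have h2 : (A *ᵥ S (Pi.single i 1)) a
        = ∑ b, S (Pi.single i 1) b * H ((Pi.single b 1 : Fin m → ℝ), (0 : Fin p → ℝ))
            ((Pi.single a 1 : Fin m → ℝ), (0 : Fin p → ℝ)) := by
      simp only [Matrix.mulVec, dotProduct]
      refine Finset.sum_congr rfl fun b _ => ?_
      rw [hA a b, hHsymm]
      ring
    rw [h2]
    linarith [h1]
  have hw : ∀ i : Fin p, S (Pi.single i 1) = -(A⁻¹ *ᵥ (fun a => B a i)) := by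
    intro i
    have h := congrArg (fun v => A⁻¹ *ᵥ v) (hmul i)
    simp only [Matrix.mulVec_mulVec, Matrix.nonsing_inv_mul A hAdet, Matrix.one_mulVec] at h
    rw [h, show (fun a => -(B a i)) = -(fun a => B a i) from rfl, Matrix.mulVec_neg]
  ext i j
  show fderiv ℝ (fun θ => fderiv ℝ (fun θ' => K (shat θ') θ' - shat θ' ⬝ᵥ x) θ
      (Pi.single j 1)) θ₀ (Pi.single i 1) = (D - Bᵀ * A⁻¹ * B) i j
  rw [hHess i j, hsplitH, hHlin, ← hD i j]
  have hrw : ∀ b : Fin m, H ((Pi.single b 1 : Fin m → ℝ), (0 : Fin p → ℝ))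
      ((0 : Fin m → ℝ), (Pi.single j 1 : Fin p → ℝ)) = B b j := by
    intro b
    rw [hHsymm]
    exact (hB b j).symm
  have hSb : ∀ b : Fin m, S (Pi.single i 1) b = -(∑ c, A⁻¹ b c * B c i) := by
    intro b
    rw [hw i]
    simp [Matrix.mulVec, dotProduct]
  have hsum : (∑ b, S (Pi.single i 1) b * H ((Pi.single b 1 : Fin m → ℝ), (0 : Fin p → ℝ))
        ((0 : Fin m → ℝ), (Pi.single j 1 : Fin p → ℝ)))
      = -((Bᵀ * A⁻¹ * B) i j) := by
    have hstep : (∑ b, S (Pi.single i 1) b * H ((Pi.single b 1 : Fin m → ℝ), (0 : Fin p → ℝ))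
          ((0 : Fin m → ℝ), (Pi.single j 1 : Fin p → ℝ)))
        = ∑ b, (-(∑ c, A⁻¹ b c * B c i)) * B b j := by
      refine Finset.sum_congr rfl fun b _ => ?_
      rw [hrw b, hSb b]
    rw [hstep]
    rw [Matrix.mul_apply]
    rw [← Finset.sum_neg_distrib]
    refine Finset.sum_congr rfl fun b _ => ?_
    rw [Matrix.mul_apply]
    have : (∑ c, A⁻¹ b c * B c i) = ∑ c, Bᵀ i c * A⁻¹ c b := by
      refine Finset.sum_congr rfl fun c _ => ?_
      rw [Matrix.transpose_apply, hAinvsymm b c]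
      ring
    rw [this]
    ring
  rw [hsum, Matrix.sub_apply]
  ring
end
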